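/- Let F be an Orlicz function with the Δ₂-condition such that for suitable constants C₂ > Δ, C₃ > 1 and r > 0 and all 0 < x ≤ 1, Φ₊^∞(x, C₂) ≤ C₃ x^{−r} (counting disjoint intervals [a_k,b_k] ⊂ [1,∞) with F_{b_k}(x) ≥ C₂ F_{a_k}(x)). Then for every integer m > r there exist constants C₆ and 0 < α < 1 such that Φ₊^∞(x, Δ·C₂^m) and in fact Φ₊^∞(x, C₂^m) ≤ C₆ x^{−α} for all 0 < x ≤ 1. -/

import Mathlib

open Set

/-- `F_t(x) = F(tx)/F(t)`. -/
noncomputable def Ft (F : ℝ → ℝ) (t x : ℝ) : ℝ := F (t * x) / F t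

/-- A chain `1 ≤ a₁ < b₁ ≤ a₂ < b₂ ≤ ⋯ ≤ a_n < b_n`. -/
def OrlChain (a b : ℕ → ℝ) (n : ℕ) : Prop :=
  (∀ k < n, 1 ≤ a k ∧ a k < b k) ∧ ∀ k, k + 1 < n → b k ≤ a (k + 1)

lemma chain_le {a b : ℕ → ℝ} {n : ℕ} (h : OrlChain a b n) :
    ∀ k l, k < l → l < n → b k ≤ a l := by
  intro k l
  induction l with
  | zero => omega
  | succ l ih =>
    intro hkl hln
    rcases Nat.lt_succ_iff_lt_or_eq.mp hkl with h' | h'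
    · have h1 := ih h' (by omega)
      have h2 := (h.1 l (by omega)).2
      have h3 := h.2 l hln
      linarith
    · subst h'
      exact h.2 k hln

lemma telescope (F : ℝ → ℝ) (hpos : ∀ t, 0 < t → 0 < F t) (ξ : ℝ) (hξ : 0 < ξ)
    (t : ℝ) (ht : 0 < t) (m : ℕ) :
    ∏ j ∈ Finset.range m, Ft F (t * ξ ^ j) ξ = Ft F t (ξ ^ m) := by
  induction m with
  | zero => simp [Ft, ne_of_gt (hpos t ht)]
  | succ m ih =>
    rw [Finset.prod_range_succ, ih]
    unfold Ft
    have h1 : (0:ℝ) < F t := hpos t ht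
    have h2 : (0:ℝ) < F (t * ξ ^ m) := hpos _ (by positivity)
    have h3 : t * ξ ^ m * ξ = t * ξ ^ (m + 1) := by ring
    rw [h3]
    field_simp

lemma exists_good_j (F : ℝ → ℝ) (hpos : ∀ t, 0 < t → 0 < F t) (C₂ : ℝ)
    (m : ℕ) (hm : 0 < m) (ξ : ℝ) (hξ : 0 < ξ) (u v : ℝ) (hu : 0 < u) (hv : 0 < v)
    (h : C₂ ^ m * Ft F u (ξ ^ m) ≤ Ft F v (ξ ^ m)) :
    ∃ j, j < m ∧ C₂ * Ft F (u * ξ ^ j) ξ ≤ Ft F (v * ξ ^ j) ξ := by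
  by_contra hcon
  push_neg at hcon
  have hFt : ∀ s, 0 < s → 0 < Ft F s ξ := by
    intro s hs
    exact div_pos (hpos _ (by positivity)) (hpos _ hs)
  have hlt : ∏ j ∈ Finset.range m, Ft F (v * ξ ^ j) ξ
      < ∏ j ∈ Finset.range m, (C₂ * Ft F (u * ξ ^ j) ξ) := by
    apply Finset.prod_lt_prod_of_nonempty
    · intro i _; exact hFt _ (by positivity)
    · intro i hi; exact hcon i (Finset.mem_range.mp hi)
    · exact Finset.nonempty_range_iff.mpr (by omega)
  rw [Finset.prod_mul_distrib, Finset.prod_const, Finset.card_range,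
    telescope F hpos ξ hξ u hu, telescope F hpos ξ hξ v hv] at hlt
  linarith

lemma finset_to_chain (a b : ℕ → ℝ) (J : ℝ → ℝ → Prop) (S : Finset ℕ)
    (h1 : ∀ k ∈ S, 1 ≤ a k ∧ a k < b k)
    (h2 : ∀ k ∈ S, ∀ l ∈ S, k < l → b k ≤ a l)
    (hJ : ∀ k ∈ S, J (a k) (b k)) :
    ∃ a' b' : ℕ → ℝ, OrlChain a' b' S.card ∧ ∀ k < S.card, J (a' k) (b' k) := by
  classical
  set L := S.sort (· ≤ ·) with hL
  have hlen : L.length = S.card := S.length_sort _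
  have hmem : ∀ i (h : i < L.length), L.getD i 0 ∈ S := by
    intro i h
    rw [L.getD_eq_getElem 0 h]
    exact (Finset.mem_sort _).mp (L.getElem_mem h)
  have hlt : ∀ i j (hi : i < L.length) (hj : j < L.length), i < j →
      L.getD i 0 < L.getD j 0 := by
    intro i j hi hj hij
    rw [L.getD_eq_getElem 0 hi, L.getD_eq_getElem 0 hj]
    exact List.Pairwise.rel_get_of_lt (S.sortedLT_sort.pairwise) (by simpa using hij)
  refine ⟨fun i => a (L.getD i 0), fun i => b (L.getD i 0), ⟨?_, ?_⟩, ?_⟩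
  · intro k hk
    exact h1 _ (hmem k (by omega))
  · intro k hk
    exact h2 _ (hmem k (by omega)) _ (hmem (k+1) (by omega))
      (hlt k (k+1) (by omega) (by omega) (by omega))
  · intro k hk
    exact hJ _ (hmem k (by omega))

lemma geom_count (a b : ℕ → ℝ) (S : Finset ℕ) (M : ℝ) (hM : 1 ≤ M)
    (h1 : ∀ k ∈ S, 1 ≤ a k ∧ 2 * a k < b k)
    (h2 : ∀ k ∈ S, ∀ l ∈ S, k < l → b k ≤ a l)
    (hlt : ∀ k ∈ S, a k < M) :
    (S.card : ℝ) ≤ Real.logb 2 M + 1 := by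
  classical
  rcases S.eq_empty_or_nonempty with h | h
  · simp [h]
    have : 0 ≤ Real.logb 2 M := Real.logb_nonneg (by norm_num) hM
    linarith
  set L := S.sort (· ≤ ·) with hLdef
  have hlen : L.length = S.card := S.length_sort _
  have hmem : ∀ i (h : i < L.length), L.getD i 0 ∈ S := by
    intro i h
    rw [L.getD_eq_getElem 0 h]
    exact (Finset.mem_sort _).mp (L.getElem_mem h)
  have hmono : ∀ i j (hi : i < L.length) (hj : j < L.length), i < j →
      L.getD i 0 < L.getD j 0 := by
    intro i j hi hj hij
    rw [L.getD_eq_getElem 0 hi, L.getD_eq_getElem 0 hj]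
    exact List.Pairwise.rel_get_of_lt (S.sortedLT_sort.pairwise) (by simpa using hij)
  have key : ∀ i, i < L.length → (2:ℝ) ^ i ≤ a (L.getD i 0) := by
    intro i
    induction i with
    | zero => intro h; simpa using (h1 _ (hmem 0 h)).1
    | succ i ih =>
      intro h
      have hi : i < L.length := by omega
      have e1 := ih hi
      have e2 := (h1 _ (hmem i hi)).2
      have e3 := h2 _ (hmem i hi) _ (hmem (i+1) h) (hmono i (i+1) hi h (by omega))
      rw [pow_succ]
      linarith
  have hc : 1 ≤ S.card := Finset.card_pos.mpr h
  have hlast : (2:ℝ) ^ (S.card - 1) < M := by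
    have h' : S.card - 1 < L.length := by omega
    exact lt_of_le_of_lt (key _ h') (hlt _ (hmem _ h'))
  have hlog : ((S.card - 1 : ℕ) : ℝ) * Real.log 2 ≤ Real.log M := by
    have := Real.log_le_log (by positivity) hlast.le
    rwa [Real.log_pow] at this
  have hlog2 : (0:ℝ) < Real.log 2 := Real.log_pos (by norm_num)
  have hle : ((S.card - 1 : ℕ) : ℝ) ≤ Real.logb 2 M := by
    rw [Real.logb, le_div_iff₀ hlog2]
    exact hlog
  have hcast : ((S.card - 1 : ℕ) : ℝ) = (S.card : ℝ) - 1 := by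
    rw [Nat.cast_sub hc]; norm_num
  linarith [hcast ▸ hle]

lemma doubling_gap (F : ℝ → ℝ) (hF0 : F 0 = 0) (hmono : StrictMonoOn F (Ici 0))
    (Δ : ℝ) (hΔ : ∀ x ≥ (0 : ℝ), F (2 * x) ≤ Δ * F x)
    (x : ℝ) (hx : x ∈ Ioc (0:ℝ) 1) (t t' : ℝ) (ht : 1 ≤ t) (h1 : t ≤ t') (h2 : t' ≤ 2 * t) :
    Ft F t' x ≤ Δ * Ft F t x := by
  have hx0 : 0 < x := hx.1
  have ht0 : 0 < t := by linarith
  have ht0' : 0 < t' := by linarith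
  have hpos : ∀ s : ℝ, 0 < s → 0 < F s := by
    intro s hs
    rw [← hF0]
    exact hmono (by simp) (by simp [hs.le]) hs
  have hFt : 0 < F t := hpos t ht0
  have hFt' : F t ≤ F t' := hmono.monotoneOn (by simp [ht0.le]) (by simp [ht0'.le]) h1
  have hnum : F (t' * x) ≤ Δ * F (t * x) := by
    calc F (t' * x) ≤ F (2 * (t * x)) := by
          apply hmono.monotoneOn (by simp; positivity) (by simp; positivity)
          nlinarith
      _ ≤ Δ * F (t * x) := hΔ _ (by positivity)
  have hDpos : 0 ≤ Δ * F (t * x) := le_trans (hpos _ (by positivity)).le hnum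
  have hmain : Ft F t' x ≤ (Δ * F (t * x)) / F t := by
    unfold Ft
    exact div_le_div₀ hDpos hnum hFt hFt'
  unfold Ft at hmain ⊢
  calc F (t' * x) / F t' ≤ (Δ * F (t * x)) / F t := hmain
    _ = Δ * (F (t * x) / F t) := by ring

/-- Bootstrapping of jump counts: if the number of jumps `F_{b_k}(x) ≥ C₂ F_{a_k}(x)`
is at most `C₃ x^{−r}`, then for every integer `m > r` the number of jumps of size
`C₂^m` is at most `C₆ x^{−α}` for some `0 < α < 1`. -/
theorem jump_count_bootstrap
    (F : ℝ → ℝ) (hF0 : F 0 = 0)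
    (hmono : StrictMonoOn F (Ici 0)) (hcont : ContinuousOn F (Ici 0))
    (hconv : ConvexOn ℝ (Ici 0) F)
    (Δ : ℝ) (hΔ : ∀ x ≥ (0 : ℝ), F (2 * x) ≤ Δ * F x)
    (C₂ C₃ r : ℝ) (hC₂ : Δ < C₂) (hC₃ : 1 < C₃) (hr : 0 < r)
    (hcount : ∀ x ∈ Ioc (0 : ℝ) 1, ∀ (n : ℕ) (a b : ℕ → ℝ), OrlChain a b n →
      (∀ k < n, C₂ * Ft F (a k) x ≤ Ft F (b k) x) → (n : ℝ) ≤ C₃ * x ^ (-r)) :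
    ∀ m : ℕ, r < (m : ℝ) →
      ∃ C₆ > (0 : ℝ), ∃ α : ℝ, 0 < α ∧ α < 1 ∧
        ∀ x ∈ Ioc (0 : ℝ) 1, ∀ (n : ℕ) (a b : ℕ → ℝ), OrlChain a b n →
          (∀ k < n, C₂ ^ m * Ft F (a k) x ≤ Ft F (b k) x) →
          (n : ℝ) ≤ C₆ * x ^ (-α) := by
  classical
  intro m hm
  have hm0 : 0 < m := by
    by_contra h
    have : m = 0 := by omega
    subst this
    simp at hm
    linarith
  have hmR : (0:ℝ) < m := by exact_mod_cast hm0
  have hpos : ∀ s : ℝ, 0 < s → 0 < F s := by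
    intro s hs
    rw [← hF0]
    exact hmono (by simp) (by simp [hs.le]) hs
  have hΔ1 : 1 < Δ := by
    have h12 : F 1 < F 2 := hmono (by norm_num) (by norm_num) (by norm_num)
    have hF1 : 0 < F 1 := hpos 1 one_pos
    have h2 := hΔ 1 (by norm_num)
    norm_num at h2
    nlinarith
  set α : ℝ := (r / m + 1) / 2 with hαdef
  have hrm1 : r / m < 1 := (div_lt_one hmR).mpr hm
  have hrm0 : 0 < r / m := div_pos hr hmR
  have hα0 : 0 < α := by rw [hαdef]; linarith
  have hα1 : α < 1 := by rw [hαdef]; linarith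
  have hαr : r / m ≤ α := by rw [hαdef]; linarith
  have hlog2 : (0:ℝ) < Real.log 2 := Real.log_pos (by norm_num)
  refine ⟨(m : ℝ) * C₃ + 1 / (α * Real.log 2) + 1, by positivity, α, hα0, hα1, ?_⟩
  intro x hx n a b hchain hjump
  have hx0 : 0 < x := hx.1
  have hx1 : x ≤ 1 := hx.2
  set ξ : ℝ := x ^ ((m:ℝ)⁻¹) with hξdef
  have hξ0 : 0 < ξ := Real.rpow_pos_of_pos hx0 _
  have hξ1 : ξ ≤ 1 := Real.rpow_le_one hx0.le hx1 (by positivity)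
  have hξm : ξ ^ m = x := by
    rw [hξdef, ← Real.rpow_natCast (x ^ ((m:ℝ)⁻¹)) m, ← Real.rpow_mul hx0.le]
    rw [inv_mul_cancel₀ (by exact_mod_cast hm0.ne'), Real.rpow_one]
  -- positivity of a, b along the chain
  have hab : ∀ k, k < n → 0 < a k ∧ 0 < b k := by
    intro k hk
    have := hchain.1 k hk
    constructor <;> linarith [this.1, this.2]
  -- doubling gap: every jump interval at least doubles
  have h2a : ∀ k, k < n → 2 * a k < b k := by
    intro k hk
    by_contra hcon
    push_neg at hcon
    have hc := hchain.1 k hk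
    have hd := doubling_gap F hF0 hmono Δ hΔ x hx (a k) (b k) hc.1 hc.2.le hcon
    have hFa : 0 < Ft F (a k) x :=
      div_pos (hpos _ (by nlinarith [hc.1, hx0])) (hpos _ (by linarith [hc.1]))
    have hC2m : C₂ ≤ C₂ ^ m := le_self_pow₀ (by linarith) (by omega)
    have hj := hjump k hk
    nlinarith
  -- selection of the scale j for "good" indices
  have hsel : ∀ k, k < n → x⁻¹ ≤ a k →
      ∃ j, j < m ∧ C₂ * Ft F (a k * ξ ^ j) ξ ≤ Ft F (b k * ξ ^ j) ξ := by
    intro k hk hgood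
    have h := hjump k hk
    rw [← hξm] at h
    exact exists_good_j F hpos C₂ m hm0 ξ hξ0 _ _ (hab k hk).1 (hab k hk).2 h
  set g : ℕ → ℕ := fun k =>
    if h : k < n ∧ x⁻¹ ≤ a k then (hsel k h.1 h.2).choose else m with hgdef
  have hgmem : ∀ k ∈ Finset.range n, g k ∈ Finset.range (m + 1) := by
    intro k _
    rw [Finset.mem_range, hgdef]
    dsimp only
    split
    · next h => exact Nat.lt_succ_of_lt (hsel k h.1 h.2).choose_spec.1
    · omega
  have hcard := Finset.card_eq_sum_card_fiberwise hgmem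
  rw [Finset.card_range] at hcard
  -- bound on "good" fibers
  have hgood : ∀ j, j < m →
      (((Finset.range n).filter (fun k => g k = j)).card : ℝ) ≤ C₃ * x ^ (-(r / m)) := by
    intro j hj
    set S := (Finset.range n).filter (fun k => g k = j) with hSdef
    have hprop : ∀ k ∈ S, k < n ∧ x⁻¹ ≤ a k ∧
        C₂ * Ft F (a k * ξ ^ j) ξ ≤ Ft F (b k * ξ ^ j) ξ := by
      intro k hkS
      rw [hSdef, Finset.mem_filter, Finset.mem_range] at hkS
      obtain ⟨hkn, hgk⟩ := hkS
      rw [hgdef] at hgk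
      dsimp only at hgk
      split at hgk
      · next h =>
        obtain ⟨hj', hJ'⟩ := (hsel k h.1 h.2).choose_spec
        rw [hgk] at hJ'
        exact ⟨hkn, h.2, hJ'⟩
      · omega
    have hξj : ξ ^ m ≤ ξ ^ j := pow_le_pow_of_le_one hξ0.le hξ1 (by omega)
    have hξjpos : 0 < ξ ^ j := by positivity
    obtain ⟨a', b', hch, hJ⟩ := finset_to_chain (fun i => a i * ξ ^ j)
        (fun i => b i * ξ ^ j) (fun u v => C₂ * Ft F u ξ ≤ Ft F v ξ) S
        (by
          intro k hk
          obtain ⟨hkn, hgx, _⟩ := hprop k hk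
          constructor
          · have : x⁻¹ * x ≤ a k * ξ ^ j := by
              apply mul_le_mul hgx (by rw [← hξm] at *; exact hξj) (by rw [← hξm]; positivity)
              linarith [(hab k hkn).1]
            rwa [inv_mul_cancel₀ hx0.ne'] at this
          · exact mul_lt_mul_of_pos_right (hchain.1 k hkn).2 hξjpos)
        (by
          intro k hk l hl hkl
          exact mul_le_mul_of_nonneg_right
            (chain_le hchain k l hkl (hprop l hl).1) hξjpos.le)
        (fun k hk => (hprop k hk).2.2)
    have hcnt := hcount ξ ⟨hξ0, hξ1⟩ S.card a' b' hch hJ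
    have hξr : ξ ^ (-r) = x ^ (-(r / m)) := by
      rw [hξdef, ← Real.rpow_mul hx0.le]
      congr 1
      field_simp
    rw [hξr] at hcnt
    exact hcnt
  -- bound on the "bad" fiber
  have hbad : (((Finset.range n).filter (fun k => g k = m)).card : ℝ)
      ≤ Real.logb 2 x⁻¹ + 1 := by
    set S := (Finset.range n).filter (fun k => g k = m) with hSdef
    have hprop : ∀ k ∈ S, k < n ∧ a k < x⁻¹ := by
      intro k hkS
      rw [hSdef, Finset.mem_filter, Finset.mem_range] at hkS
      obtain ⟨hkn, hgk⟩ := hkS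
      refine ⟨hkn, ?_⟩
      by_contra hcon
      push_neg at hcon
      rw [hgdef] at hgk
      dsimp only at hgk
      split at hgk
      · next h => exact absurd hgk (Nat.ne_of_lt (hsel k h.1 h.2).choose_spec.1)
      · next h => exact h ⟨hkn, hcon⟩
    apply geom_count a b S x⁻¹ (by rw [le_inv_comm₀ one_pos hx0]; simpa using hx1)
    · intro k hk
      exact ⟨(hchain.1 k (hprop k hk).1).1, h2a k (hprop k hk).1⟩
    · intro k hk l hl hkl
      exact chain_le hchain k l hkl (hprop l hl).1
    · intro k hk
      exact (hprop k hk).2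
  -- combine
  have hsum : (n : ℝ) = ∑ j ∈ Finset.range (m + 1),
      (((Finset.range n).filter (fun k => g k = j)).card : ℝ) := by
    exact_mod_cast hcard
  rw [Finset.sum_range_succ] at hsum
  have hbound1 : ∑ j ∈ Finset.range m,
      (((Finset.range n).filter (fun k => g k = j)).card : ℝ)
      ≤ (m : ℝ) * (C₃ * x ^ (-(r / m))) := by
    calc ∑ j ∈ Finset.range m, (((Finset.range n).filter (fun k => g k = j)).card : ℝ)
        ≤ ∑ j ∈ Finset.range m, C₃ * x ^ (-(r / m)) :=
          Finset.sum_le_sum (fun j hj => hgood j (Finset.mem_range.mp hj))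
      _ = (m : ℝ) * (C₃ * x ^ (-(r / m))) := by
          rw [Finset.sum_const, Finset.card_range]; ring
  -- analytic estimates
  have hxa1 : (1:ℝ) ≤ x ^ (-α) := by
    rw [show (1:ℝ) = x ^ (0:ℝ) by rw [Real.rpow_zero]]
    exact Real.rpow_le_rpow_of_exponent_ge hx0 hx1 (by linarith)
  have hxr : x ^ (-(r / m)) ≤ x ^ (-α) :=
    Real.rpow_le_rpow_of_exponent_ge hx0 hx1 (by linarith)
  have hlogb : Real.logb 2 x⁻¹ ≤ x ^ (-α) / (α * Real.log 2) := by
    have hxi0 : 0 < x⁻¹ := by positivity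
    have h1 : α * Real.log x⁻¹ = Real.log ((x⁻¹) ^ α) := (Real.log_rpow hxi0 α).symm
    have h2 : Real.log ((x⁻¹) ^ α) ≤ (x⁻¹) ^ α - 1 :=
      Real.log_le_sub_one_of_pos (Real.rpow_pos_of_pos hxi0 α)
    have h3 : (x⁻¹) ^ α = x ^ (-α) := by
      rw [Real.inv_rpow hx0.le, ← Real.rpow_neg hx0.le]
    rw [h3] at h1 h2
    rw [Real.logb, div_le_div_iff₀ hlog2 (by positivity)]
    have hxant : 0 < x ^ (-α) := Real.rpow_pos_of_pos hx0 _
    nlinarith [hlog2, hα0]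
  have hmC₃ : (m:ℝ) * (C₃ * x ^ (-(r / m))) ≤ (m:ℝ) * C₃ * x ^ (-α) := by
    have : C₃ * x ^ (-(r/m)) ≤ C₃ * x ^ (-α) := by
      apply mul_le_mul_of_nonneg_left hxr (by linarith)
    calc (m:ℝ) * (C₃ * x ^ (-(r / m))) ≤ (m:ℝ) * (C₃ * x ^ (-α)) := by
          apply mul_le_mul_of_nonneg_left this (by positivity)
      _ = (m:ℝ) * C₃ * x ^ (-α) := by ring
  have hdiv : x ^ (-α) / (α * Real.log 2) = (1 / (α * Real.log 2)) * x ^ (-α) := by ring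
  rw [hsum]
  calc (∑ j ∈ Finset.range m, (((Finset.range n).filter (fun k => g k = j)).card : ℝ))
        + (((Finset.range n).filter (fun k => g k = m)).card : ℝ)
      ≤ (m : ℝ) * (C₃ * x ^ (-(r / m))) + (Real.logb 2 x⁻¹ + 1) := by
        exact add_le_add hbound1 hbad
    _ ≤ (m:ℝ) * C₃ * x ^ (-α) + ((1 / (α * Real.log 2)) * x ^ (-α) + x ^ (-α)) := by
        rw [← hdiv]
        exact add_le_add hmC₃ (add_le_add hlogb hxa1)
    _ = ((m : ℝ) * C₃ + 1 / (α * Real.log 2) + 1) * x ^ (-α) := by ring
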